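/- arXiv:2309.13284 — 5 statements merged into one kernel-verified Lean document; each statement's English description precedes it below -/
import Mathlib

section
/- Let R be a commutative ring with identity that is not a field (so R has at least one non-trivial ideal). Then G(R) admits a finite strong resolving set if and only if R has only finitely many ideals. -/
open SimpleGraph

/-- The type of non-trivial ideals of a commutative ring `R`
(ideals `I` with `I ≠ 0` and `I ≠ R`). -/
abbrev NontrivialIdeal (R : Type*) [CommRing R] : Type _ :=
  {I : Ideal R // I ≠ ⊥ ∧ I ≠ ⊤}

/-- The intersection graph of ideals of `R`: vertices are the non-trivial ideals,
and distinct vertices are adjacent iff their intersection is non-zero. -/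
def intersectionGraph (R : Type*) [CommRing R] : SimpleGraph (NontrivialIdeal R) where
  Adj I J := I ≠ J ∧ I.1 ⊓ J.1 ≠ ⊥
  symm := ⟨fun I J h => ⟨h.1.symm, by rw [inf_comm]; exact h.2⟩⟩
  loopless := ⟨fun I h => h.1 rfl⟩

/-- Two distinct vertices `u, v` are mutually maximally distant if
`d(v,w) ≤ d(u,v)` for every neighbour `w` of `u` and
`d(u,w) ≤ d(u,v)` for every neighbour `w` of `v`. -/
def MutuallyMaximallyDistant {V : Type*} (G : SimpleGraph V) (u v : V) : Prop :=
  u ≠ v ∧ (∀ w, G.Adj u w → G.edist v w ≤ G.edist u v) ∧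
    (∀ w, G.Adj v w → G.edist u w ≤ G.edist u v)

theorem MutuallyMaximallyDistant.symm {V : Type*} {G : SimpleGraph V} {u v : V}
    (h : MutuallyMaximallyDistant G u v) : MutuallyMaximallyDistant G v u :=
  ⟨h.1.symm,
    fun w hw => by rw [show G.edist v u = G.edist u v from G.edist_comm]; exact h.2.2 w hw,
    fun w hw => by rw [show G.edist v u = G.edist u v from G.edist_comm]; exact h.2.1 w hw⟩

/-- The strong resolving graph of `G`: `u` and `v` are adjacent iff they are
mutually maximally distant. -/
def strongResolvingGraph {V : Type*} (G : SimpleGraph V) : SimpleGraph V where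
  Adj := MutuallyMaximallyDistant G
  symm := ⟨fun _ _ h => h.symm⟩
  loopless := ⟨fun _ h => h.1 rfl⟩

/-- A vertex `w` strongly resolves `u` and `v` if `d(w,u) = d(w,v) + d(v,u)` or
`d(w,v) = d(w,u) + d(u,v)`. A set `W` is a strong resolving set if every two distinct
vertices are strongly resolved by some member of `W`. -/
def IsStrongResolvingSet {V : Type*} (G : SimpleGraph V) (W : Set V) : Prop :=
  ∀ u v : V, u ≠ v → ∃ w ∈ W,
    G.edist w u = G.edist w v + G.edist v u ∨ G.edist w v = G.edist w u + G.edist u v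

/-- The product ideal which is `Rᵢ` in the components where `I` is zero and `0` elsewhere. -/
def complIdeal {ι : Type*} (F : ι → Type*) [∀ i, CommRing (F i)] (I : Ideal (∀ i, F i)) :
    Ideal (∀ i, F i) where
  carrier := {x | ∀ i, I.map (Pi.evalRingHom F i) ≠ ⊥ → x i = 0}
  zero_mem' := fun i _ => rfl
  add_mem' := fun hx hy i hi => by
    simp only [Pi.add_apply, hx i hi, hy i hi, add_zero]
  smul_mem' := fun c x hx i hi => by
    simp only [Pi.smul_apply, smul_eq_mul, Pi.mul_apply, hx i hi, mul_zero]

section Aux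

variable {R : Type*} [CommRing R]

lemma ne_bot_mono {a b : Ideal R} (h : a ≤ b) (ha : a ≠ ⊥) : b ≠ ⊥ :=
  fun hb => ha (le_bot_iff.mp (hb ▸ h))

/-- `c` is an essential subideal of `u`. -/
def IsEss (c u : Ideal R) : Prop :=
  c ≤ u ∧ ∀ w : Ideal R, w ≤ u → w ≠ ⊥ → c ⊓ w ≠ ⊥

/-- `u` is a nonzero uniform ideal. -/
def IsUnif (u : Ideal R) : Prop :=
  u ≠ ⊥ ∧ ∀ a b : Ideal R, a ≤ u → b ≤ u → a ≠ ⊥ → b ≠ ⊥ → a ⊓ b ≠ ⊥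

/-- Two nontrivial ideals have a common essential subideal. -/
def EssRel (u v : NontrivialIdeal R) : Prop :=
  ∃ c : Ideal R, c ≠ ⊥ ∧ IsEss c u.1 ∧ IsEss c v.1

lemma essRel_refl (u : NontrivialIdeal R) : EssRel u u :=
  ⟨u.1, u.2.1, ⟨le_rfl, fun w hw hne => by rwa [inf_eq_right.mpr hw]⟩,
    ⟨le_rfl, fun w hw hne => by rwa [inf_eq_right.mpr hw]⟩⟩

lemma essRel_symm {u v : NontrivialIdeal R} (h : EssRel u v) : EssRel v u :=
  ⟨h.choose, h.choose_spec.1, h.choose_spec.2.2, h.choose_spec.2.1⟩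

lemma essRel_trans {u v z : NontrivialIdeal R} (h1 : EssRel u v) (h2 : EssRel v z) :
    EssRel u z := by
  obtain ⟨c, hc0, hcu, hcv⟩ := h1
  obtain ⟨c', hc'0, hc'v, hc'z⟩ := h2
  refine ⟨c ⊓ c', hcv.2 c' hc'v.1 hc'0, ⟨inf_le_left.trans hcu.1, ?_⟩,
    ⟨inf_le_right.trans hc'z.1, ?_⟩⟩
  · intro w hw hwne
    have h3 : c ⊓ w ≠ ⊥ := hcu.2 w hw hwne
    have h4 : c' ⊓ (c ⊓ w) ≠ ⊥ := hc'v.2 _ (inf_le_left.trans hcv.1) h3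
    refine ne_bot_mono ?_ h4
    exact le_inf (le_inf (inf_le_right.trans inf_le_left) inf_le_left) (inf_le_right.trans inf_le_right)
  · intro w hw hwne
    have h3 : c' ⊓ w ≠ ⊥ := hc'z.2 w hw hwne
    have h4 : c ⊓ (c' ⊓ w) ≠ ⊥ := hcv.2 _ (inf_le_left.trans hc'v.1) h3
    refine ne_bot_mono ?_ h4
    exact le_inf (le_inf inf_le_left (inf_le_right.trans inf_le_left))
      (inf_le_right.trans inf_le_right)

lemma essRel_of_unif {u v : NontrivialIdeal R} (hu : IsUnif u.1) (hv : IsUnif v.1)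
    (h : u.1 ⊓ v.1 ≠ ⊥) : EssRel u v := by
  refine ⟨u.1 ⊓ v.1, h, ⟨inf_le_left, ?_⟩, ⟨inf_le_right, ?_⟩⟩
  · intro w hw hwne
    exact hu.2 _ w inf_le_left hw h hwne
  · intro w hw hwne
    exact hv.2 _ w inf_le_right hw h hwne

lemma finite_of_fibers {α β : Type*} (f : α → β) (himg : (Set.range f).Finite)
    (hfib : ∀ b, (f ⁻¹' {b}).Finite) : Finite α := by
  rw [← Set.finite_univ_iff]
  have : (Set.univ : Set α) ⊆ ⋃ b ∈ Set.range f, f ⁻¹' {b} := by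
    intro x _
    simp only [Set.mem_iUnion]
    exact ⟨f x, Set.mem_range_self x, rfl⟩
  exact Set.Finite.subset (Set.Finite.biUnion himg (fun b _ => hfib b)) this

lemma finite_ideal_of_two_min {u v : Ideal R}
    (hsup : u ⊔ v = ⊤)
    (hmu : ∀ a : Ideal R, a ≤ u → a = ⊥ ∨ a = u)
    (hmv : ∀ a : Ideal R, a ≤ v → a = ⊥ ∨ a = v) : Finite (Ideal R) := by
  have h1 : (1 : R) ∈ u ⊔ v := by rw [hsup]; trivial
  obtain ⟨e, he, f, hf, hef⟩ := Submodule.mem_sup.mp h1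
  rw [← Set.finite_univ_iff]
  refine Set.Finite.subset (Set.toFinite {⊥, u, v, ⊤}) ?_
  intro c _
  have hc : c = (c ⊓ u) ⊔ (c ⊓ v) := by
    refine le_antisymm ?_ (sup_le inf_le_left inf_le_left)
    intro x hx
    have : x = x * e + x * f := by rw [← mul_add, hef, mul_one]
    rw [this]
    exact Submodule.add_mem_sup ⟨Ideal.mul_mem_right e c hx, Ideal.mul_mem_left u x he⟩
      ⟨Ideal.mul_mem_right f c hx, Ideal.mul_mem_left v x hf⟩
  rcases hmu (c ⊓ u) inf_le_right with h | h <;> rcases hmv (c ⊓ v) inf_le_right with h' | h' <;>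
    rw [h, h'] at hc
  · simp only [sup_bot_eq] at hc; left; exact hc
  · rw [bot_sup_eq] at hc; right; right; left; exact hc
  · rw [sup_bot_eq] at hc; right; left; exact hc
  · rw [hsup] at hc; right; right; right; exact hc

end Aux

section Graph

variable {R : Type*} [CommRing R]

lemma ig_adj {u v : NontrivialIdeal R} :
    (intersectionGraph R).Adj u v ↔ u ≠ v ∧ u.1 ⊓ v.1 ≠ ⊥ := Iff.rfl

lemma one_le_edist {u v : NontrivialIdeal R} (h : u ≠ v) :
    1 ≤ (intersectionGraph R).edist u v :=
  ENat.one_le_iff_ne_zero.mpr (fun h0 => h (SimpleGraph.edist_eq_zero_iff.mp h0))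

lemma neighbor_package (u v : NontrivialIdeal R) (W : Ideal R) (hWb : W ≠ ⊥) (hWt : W ≠ ⊤)
    (hneu : u.1 ≠ W) (hnev : W ≠ v.1) (huW : u.1 ⊓ W ≠ ⊥) (hWv : W ⊓ v.1 ≠ ⊥) :
    ∃ w, (intersectionGraph R).Adj u w ∧ (intersectionGraph R).Adj w v :=
  ⟨⟨W, hWb, hWt⟩, ig_adj.mpr ⟨fun h => hneu (congrArg Subtype.val h), huW⟩,
    ig_adj.mpr ⟨fun h => hnev (congrArg Subtype.val h), hWv⟩⟩

lemma exists_common_neighbor [Infinite (Ideal R)] (u v : NontrivialIdeal R)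
    (huv : u.1 ⊓ v.1 = ⊥) :
    ∃ w, (intersectionGraph R).Adj u w ∧ (intersectionGraph R).Adj w v := by
  have hvu : v.1 ⊓ u.1 = ⊥ := by rw [inf_comm]; exact huv
  have hvnleu : ¬ v.1 ≤ u.1 := fun h => v.2.1 (by rwa [inf_eq_left.mpr h] at hvu)
  have hunlev : ¬ u.1 ≤ v.1 := fun h => u.2.1 (by rwa [inf_eq_left.mpr h] at huv)
  by_cases hs : u.1 ⊔ v.1 = ⊤
  · by_cases ha : ∃ a : Ideal R, a ≠ ⊥ ∧ a < u.1
    · obtain ⟨a, ha0, hau⟩ := ha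
      have hne_top : a ⊔ v.1 ≠ ⊤ := by
        intro htop
        have h2 : (a ⊔ v.1) ⊓ u.1 = a ⊔ (v.1 ⊓ u.1) := sup_inf_assoc_of_le v.1 hau.le
        rw [htop, top_inf_eq, hvu, sup_bot_eq] at h2
        exact hau.ne h2.symm
      refine neighbor_package u v (a ⊔ v.1) (ne_bot_mono le_sup_right v.2.1) hne_top ?_ ?_ ?_ ?_
      · intro h; exact hvnleu (h ▸ le_sup_right)
      · intro h; exact ha0 (le_bot_iff.mp (huv ▸ le_inf hau.le (h ▸ le_sup_left)))
      · exact ne_bot_mono (le_inf hau.le le_sup_left) ha0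
      · rw [inf_comm]; exact ne_bot_mono (le_inf le_rfl le_sup_right) v.2.1
    · by_cases hb : ∃ b : Ideal R, b ≠ ⊥ ∧ b < v.1
      · obtain ⟨b, hb0, hbv⟩ := hb
        have hne_top : u.1 ⊔ b ≠ ⊤ := by
          intro htop
          have h2 : (b ⊔ u.1) ⊓ v.1 = b ⊔ (u.1 ⊓ v.1) := sup_inf_assoc_of_le u.1 hbv.le
          rw [sup_comm b u.1, htop, top_inf_eq, huv, sup_bot_eq] at h2
          exact hbv.ne h2.symm
        refine neighbor_package u v (u.1 ⊔ b) (ne_bot_mono le_sup_left u.2.1) hne_top ?_ ?_ ?_ ?_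
        · intro h; exact hb0 (le_bot_iff.mp (huv ▸ le_inf (h ▸ le_sup_right) hbv.le))
        · intro h; exact hunlev (h ▸ le_sup_left)
        · exact ne_bot_mono (le_inf le_rfl le_sup_left) u.2.1
        · exact ne_bot_mono (le_inf le_sup_right hbv.le) hb0
      · exfalso
        push_neg at ha hb
        have hmu : ∀ a : Ideal R, a ≤ u.1 → a = ⊥ ∨ a = u.1 := by
          intro a hle
          rcases eq_or_ne a u.1 with h | h
          · right; exact h
          · left; by_contra h0; exact ha a h0 (lt_of_le_of_ne hle h)
        have hmv : ∀ a : Ideal R, a ≤ v.1 → a = ⊥ ∨ a = v.1 := by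
          intro a hle
          rcases eq_or_ne a v.1 with h | h
          · right; exact h
          · left; by_contra h0; exact hb a h0 (lt_of_le_of_ne hle h)
        haveI := finite_ideal_of_two_min hs hmu hmv
        exact not_finite (Ideal R)
  · refine neighbor_package u v (u.1 ⊔ v.1) (ne_bot_mono le_sup_left u.2.1) hs ?_ ?_ ?_ ?_
    · intro h; exact hvnleu (h ▸ le_sup_right)
    · intro h; exact hunlev (h ▸ le_sup_left)
    · exact ne_bot_mono (le_inf le_rfl le_sup_left) u.2.1
    · exact ne_bot_mono (le_inf le_sup_right le_rfl) v.2.1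

lemma edist_le_two [Infinite (Ideal R)] (u v : NontrivialIdeal R) :
    (intersectionGraph R).edist u v ≤ 2 := by
  rcases eq_or_ne u v with rfl | hne
  · rw [SimpleGraph.edist_self]; norm_num
  by_cases h : u.1 ⊓ v.1 = ⊥
  · obtain ⟨w, h1, h2⟩ := exists_common_neighbor u v h
    calc (intersectionGraph R).edist u v ≤ _ + _ := SimpleGraph.edist_triangle (v := w)
    _ ≤ 1 + 1 := add_le_add (SimpleGraph.edist_eq_one_iff_adj.mpr h1).le
        (SimpleGraph.edist_eq_one_iff_adj.mpr h2).le
    _ = 2 := by norm_num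
  · exact le_trans (SimpleGraph.edist_eq_one_iff_adj.mpr (ig_adj.mpr ⟨hne, h⟩)).le (by norm_num)

end Graph

section MMD

variable {R : Type*} [CommRing R]

lemma mmd_of_disjoint [Infinite (Ideal R)] {u v : NontrivialIdeal R} (hne : u ≠ v)
    (h : u.1 ⊓ v.1 = ⊥) :
    MutuallyMaximallyDistant (intersectionGraph R) u v := by
  have h2 : (intersectionGraph R).edist u v = 2 := by
    refine le_antisymm (edist_le_two u v) ?_
    have h0 : (intersectionGraph R).edist u v ≠ 0 :=
      fun h0 => hne (SimpleGraph.edist_eq_zero_iff.mp h0)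
    have h1 : (intersectionGraph R).edist u v ≠ 1 :=
      fun h1 => (ig_adj.mp (SimpleGraph.edist_eq_one_iff_adj.mp h1)).2 h
    have hle : 1 ≤ (intersectionGraph R).edist u v := ENat.one_le_iff_ne_zero.mpr h0
    have : (1 : ℕ∞) < (intersectionGraph R).edist u v := lt_of_le_of_ne hle (Ne.symm h1)
    rw [show (2 : ℕ∞) = 1 + 1 from rfl]
    exact (ENat.add_one_le_iff (by norm_num)).mpr this
  refine ⟨hne, fun w hw => ?_, fun w hw => ?_⟩
  · rcases eq_or_ne v w with rfl | hvw
    · rw [SimpleGraph.edist_self]; exact zero_le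
    · rw [h2]; exact edist_le_two v w
  · rcases eq_or_ne u w with rfl | huw
    · rw [SimpleGraph.edist_self]; exact zero_le
    · rw [h2]; exact edist_le_two u w

lemma mmd_of_essRel {u v : NontrivialIdeal R} (hne : u ≠ v) (h : EssRel u v) :
    MutuallyMaximallyDistant (intersectionGraph R) u v := by
  obtain ⟨c, hc0, hcu, hcv⟩ := h
  have key : ∀ x y w : NontrivialIdeal R, IsEss c x.1 → IsEss c y.1 →
      (intersectionGraph R).Adj x w → x ≠ y → (intersectionGraph R).edist y w ≤
        (intersectionGraph R).edist x y := by
    intro x y w hcx hcy hw hxy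
    rcases eq_or_ne y w with rfl | hyw
    · rw [SimpleGraph.edist_self]; exact zero_le
    · have hxw := (ig_adj.mp hw).2
      have h3 : c ⊓ (x.1 ⊓ w.1) ≠ ⊥ := hcx.2 _ inf_le_left hxw
      have h4 : y.1 ⊓ w.1 ≠ ⊥ :=
        ne_bot_mono (le_inf (inf_le_left.trans hcy.1) (inf_le_right.trans inf_le_right)) h3
      refine le_trans (SimpleGraph.edist_eq_one_iff_adj.mpr (ig_adj.mpr ⟨hyw, h4⟩)).le
        (one_le_edist hxy)
  exact ⟨hne, fun w hw => key u v w hcu hcv hw hne,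
    fun w hw => by
      rw [show (intersectionGraph R).edist u v = (intersectionGraph R).edist v u from
        SimpleGraph.edist_comm]
      exact key v u w hcv hcu hw hne.symm⟩

lemma srs_aux [Infinite (Ideal R)] {u v w : NontrivialIdeal R}
    (h : MutuallyMaximallyDistant (intersectionGraph R) u v)
    (hwv : w ≠ v)
    (heq : (intersectionGraph R).edist w u =
      (intersectionGraph R).edist w v + (intersectionGraph R).edist v u) : False := by
  have h1 : 1 ≤ (intersectionGraph R).edist w v := one_le_edist hwv
  have h2 : 1 ≤ (intersectionGraph R).edist v u := one_le_edist h.1.symm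
  have hle : (intersectionGraph R).edist w v + (intersectionGraph R).edist v u ≤ 2 :=
    heq ▸ edist_le_two w u
  have hwvt : (intersectionGraph R).edist w v ≠ ⊤ := by
    intro ht; rw [ht] at hle
    exact (by norm_num : ¬ ((⊤ : ℕ∞) ≤ 2)) (le_trans (le_add_right le_rfl) hle)
  have hwv1 : (intersectionGraph R).edist w v = 1 := by
    refine le_antisymm ?_ h1
    have := le_trans (add_le_add_right h2 _) hle
    rw [show (2 : ℕ∞) = 1 + 1 from rfl] at this
    have hlt := (ENat.add_one_le_iff hwvt).mp this
    exact (ENat.lt_add_one_iff (by norm_num)).mp hlt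
  have hvu1 : (intersectionGraph R).edist v u = 1 := by
    refine le_antisymm ?_ h2
    rw [hwv1, add_comm, show (2 : ℕ∞) = 1 + 1 from rfl] at hle
    have hvut : (intersectionGraph R).edist v u ≠ ⊤ := by
      intro ht; rw [ht] at hle
      exact (by norm_num : ¬ ((⊤ : ℕ∞) + 1 ≤ 1 + 1)) hle
    exact (ENat.lt_add_one_iff (by norm_num)).mp ((ENat.add_one_le_iff hvut).mp hle)
  have hadj : (intersectionGraph R).Adj v w :=
    (SimpleGraph.edist_eq_one_iff_adj.mp hwv1).symm
  have hbound := h.2.2 w hadj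
  rw [show (intersectionGraph R).edist u w = (intersectionGraph R).edist w u from
    SimpleGraph.edist_comm, show (intersectionGraph R).edist u v =
      (intersectionGraph R).edist v u from SimpleGraph.edist_comm, heq, hwv1, hvu1] at hbound
  exact (by norm_num : ¬ ((1 : ℕ∞) + 1 ≤ 1)) hbound

lemma not_srs [Infinite (Ideal R)] {S : Set (NontrivialIdeal R)} (hS : S.Infinite)
    (hmmd : S.Pairwise (MutuallyMaximallyDistant (intersectionGraph R)))
    {W : Set (NontrivialIdeal R)} (hWf : W.Finite)
    (hW : IsStrongResolvingSet (intersectionGraph R) W) : False := by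
  have hdiff : (S \ W).Infinite := hS.diff hWf
  obtain ⟨u, hu⟩ := hdiff.nonempty
  obtain ⟨v, hv⟩ := (hdiff.diff (Set.finite_singleton u)).nonempty
  have hne : u ≠ v := fun h => hv.2 (by rw [← h]; exact rfl)
  have hm := hmmd hu.1 hv.1.1 hne
  obtain ⟨w, hwW, hcase⟩ := hW u v hne
  have hwu : w ≠ u := fun h => hu.2 (h ▸ hwW)
  have hwv : w ≠ v := fun h => hv.1.2 (h ▸ hwW)
  rcases hcase with h | h
  · exact srs_aux hm hwv h
  · exact srs_aux hm.symm hwu h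

end MMD

section Unif

variable {R : Type*} [CommRing R]

lemma exists_unif_le
    (hnd : ¬ ∃ S : Set (NontrivialIdeal R), S.Infinite ∧
      S.Pairwise (fun x y => x.1 ⊓ y.1 = ⊥))
    (u : NontrivialIdeal R) : ∃ c : Ideal R, c ≤ u.1 ∧ IsUnif c := by
  by_contra hcon
  push_neg at hcon
  have H : ∀ c : Ideal R, c ≤ u.1 → c ≠ ⊥ →
      ∃ a b : Ideal R, a ≤ c ∧ b ≤ c ∧ a ≠ ⊥ ∧ b ≠ ⊥ ∧ a ⊓ b = ⊥ := by
    intro c hle hne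
    have h1 := hcon c hle
    rw [IsUnif] at h1
    push_neg at h1
    obtain ⟨a, b, ha, hb, ha0, hb0, hab⟩ := h1 hne
    exact ⟨a, b, ha, hb, ha0, hb0, hab⟩
  classical
  choose A B hA hB hA0 hB0 hAB using H
  let T := {c : Ideal R // c ≤ u.1 ∧ c ≠ ⊥}
  let step : T → T := fun p => ⟨B p.1 p.2.1 p.2.2, (hB _ _ _).trans p.2.1, hB0 _ _ _⟩
  let Bs : ℕ → T := fun n => step^[n] ⟨u.1, le_rfl, u.2.1⟩
  have hBs_succ : ∀ n, Bs (n + 1) = step (Bs n) := fun n =>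
    Function.iterate_succ_apply' step n _
  let A' : ℕ → Ideal R := fun n => A (Bs n).1 (Bs n).2.1 (Bs n).2.2
  have hA'le : ∀ n, A' n ≤ (Bs n).1 := fun n => hA _ _ _
  have hA'0 : ∀ n, A' n ≠ ⊥ := fun n => hA0 _ _ _
  have hdisj0 : ∀ n, A' n ⊓ (Bs (n + 1)).1 = ⊥ := by
    intro n; rw [hBs_succ n]; exact hAB _ _ _
  have hmono : ∀ n k, (Bs (n + k)).1 ≤ (Bs n).1 := by
    intro n k
    induction k with
    | zero => exact le_rfl
    | succ m ih =>
        have : (Bs (n + m + 1)).1 ≤ (Bs (n + m)).1 := by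
          rw [hBs_succ (n + m)]; exact hB _ _ _
        exact le_trans this ih
  have hdisj : ∀ m n, m < n → A' m ⊓ A' n = ⊥ := by
    intro m n h
    have h1 : A' n ≤ (Bs (m + 1)).1 := by
      have h2 := hmono (m + 1) (n - (m + 1))
      rw [Nat.add_sub_cancel' h] at h2
      exact le_trans (hA'le n) h2
    exact le_bot_iff.mp (le_trans (le_inf inf_le_left (le_trans inf_le_right h1))
      (hdisj0 m).le)
  have hd : ∀ m n, m ≠ n → A' m ⊓ A' n = ⊥ := by
    intro m n h
    rcases h.lt_or_gt with h | h
    · exact hdisj m n h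
    · rw [inf_comm]; exact hdisj n m h
  have hA'u : ∀ n, A' n ≤ u.1 := fun n => (hA'le n).trans (Bs n).2.1
  let f : ℕ → NontrivialIdeal R := fun n =>
    ⟨A' n, hA'0 n, fun h => u.2.2 (top_le_iff.mp (le_trans (le_of_eq h.symm) (hA'u n)))⟩
  have hinj : Function.Injective f := by
    intro m n h
    by_contra hmn
    have h2 : A' m = A' n := congrArg Subtype.val h
    have h3 := hd m n hmn
    rw [h2, inf_idem] at h3
    exact hA'0 n h3
  refine hnd ⟨Set.range f, Set.infinite_range_of_injective hinj, ?_⟩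
  rintro x ⟨m, rfl⟩ y ⟨n, rfl⟩ hne
  exact hd m n (fun h => hne (by rw [h]))

lemma finite_ideal_of_finite_vertices (h : Finite (NontrivialIdeal R)) : Finite (Ideal R) := by
  haveI := h
  rw [← Set.finite_univ_iff]
  have hsub : (Set.univ : Set (Ideal R)) ⊆
      insert ⊥ (insert ⊤ (Subtype.val '' (Set.univ : Set (NontrivialIdeal R)))) := by
    intro c _
    rcases eq_or_ne c ⊥ with rfl | h1
    · exact Set.mem_insert _ _
    rcases eq_or_ne c ⊤ with rfl | h2
    · exact Set.mem_insert_of_mem _ (Set.mem_insert _ _)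
    · exact Set.mem_insert_of_mem _ (Set.mem_insert_of_mem _ ⟨⟨c, h1, h2⟩, trivial, rfl⟩)
  exact Set.Finite.subset ((((Set.finite_univ).image _).insert ⊤).insert ⊥) hsub

lemma essRel_of_phi_eq (hsub : ∀ u : NontrivialIdeal R, ∃ c : Ideal R, c ≤ u.1 ∧ IsUnif c)
    {x y : NontrivialIdeal R}
    (h : {c : Ideal R | IsUnif c ∧ c ≤ x.1} = {c : Ideal R | IsUnif c ∧ c ≤ y.1}) :
    EssRel x y := by
  set E := sSup {c : Ideal R | IsUnif c ∧ c ≤ x.1} with hE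
  have hEx : E ≤ x.1 := sSup_le (fun c hc => hc.2)
  have hEy : E ≤ y.1 := by rw [hE, h]; exact sSup_le (fun c hc => hc.2)
  have hEb : E ≠ ⊥ := by
    obtain ⟨c, hcle, hcu⟩ := hsub x
    exact ne_bot_mono (le_sSup ⟨hcu, hcle⟩) hcu.1
  have hess : ∀ z : NontrivialIdeal R,
      {c : Ideal R | IsUnif c ∧ c ≤ x.1} = {c : Ideal R | IsUnif c ∧ c ≤ z.1} →
      ∀ w : Ideal R, w ≤ z.1 → w ≠ ⊥ → E ⊓ w ≠ ⊥ := by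
    intro z hz w hw hw0
    have hwt : w ≠ ⊤ := fun ht => z.2.2 (top_le_iff.mp (ht ▸ hw))
    obtain ⟨c, hcle, hcu⟩ := hsub ⟨w, hw0, hwt⟩
    have hmem : c ∈ {c : Ideal R | IsUnif c ∧ c ≤ z.1} := ⟨hcu, hcle.trans hw⟩
    rw [← hz] at hmem
    exact ne_bot_mono (le_inf (le_sSup hmem) hcle) hcu.1
  exact ⟨E, hEb, ⟨hEx, hess x rfl⟩, ⟨hEy, hess y h⟩⟩

lemma exists_infinite_mmd [Infinite (Ideal R)] :
    ∃ S : Set (NontrivialIdeal R), S.Infinite ∧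
      S.Pairwise (MutuallyMaximallyDistant (intersectionGraph R)) := by
  by_contra hcon
  have hnd : ¬ ∃ S : Set (NontrivialIdeal R), S.Infinite ∧
      S.Pairwise (fun x y => x.1 ⊓ y.1 = ⊥) := by
    rintro ⟨S, h1, h2⟩
    exact hcon ⟨S, h1, fun x hx y hy hne => mmd_of_disjoint hne (h2 hx hy hne)⟩
  have hclass : ∀ u : NontrivialIdeal R, {v | EssRel u v}.Finite := by
    intro u
    by_contra hf
    refine hcon ⟨{v | EssRel u v}, hf, fun x hx y hy hne => ?_⟩
    exact mmd_of_essRel hne (essRel_trans (essRel_symm hx) hy)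
  have hVinf : Infinite (NontrivialIdeal R) := by
    rw [← not_finite_iff_infinite]
    intro hfin
    haveI := finite_ideal_of_finite_vertices hfin
    exact not_finite (Ideal R)
  by_cases htop : IsUnif (⊤ : Ideal R)
  · refine hcon ⟨Set.univ, Set.infinite_univ, fun x _ y _ hne => ?_⟩
    have h0 : x.1 ⊓ y.1 ≠ ⊥ := htop.2 _ _ le_top le_top x.2.1 y.2.1
    exact mmd_of_essRel hne ⟨x.1 ⊓ y.1, h0,
      ⟨inf_le_left, fun w _ hw0 => htop.2 _ _ le_top le_top h0 hw0⟩,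
      ⟨inf_le_right, fun w _ hw0 => htop.2 _ _ le_top le_top h0 hw0⟩⟩
  have hunif : {x : NontrivialIdeal R | IsUnif x.1}.Finite := by
    by_contra hf
    refine hcon ⟨_, hf, fun x hx y hy hne => ?_⟩
    by_cases h : x.1 ⊓ y.1 = ⊥
    · exact mmd_of_disjoint hne h
    · exact mmd_of_essRel hne (essRel_of_unif hx hy h)
  have hsub := exists_unif_le hnd
  have hU : {c : Ideal R | IsUnif c}.Finite := by
    refine Set.Finite.subset (hunif.image Subtype.val) ?_
    intro c hc
    have hct : c ≠ ⊤ := fun ht => htop (ht ▸ hc)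
    exact ⟨⟨c, hc.1, hct⟩, hc, rfl⟩
  let Φ : NontrivialIdeal R → Set (Ideal R) := fun x => {c | IsUnif c ∧ c ≤ x.1}
  have himg : (Set.range Φ).Finite := by
    refine Set.Finite.subset hU.finite_subsets ?_
    rintro s ⟨x, rfl⟩
    intro c hc
    exact hc.1
  have hfib : ∀ s, (Φ ⁻¹' {s}).Finite := by
    intro s
    rcases Set.eq_empty_or_nonempty (Φ ⁻¹' {s}) with h | ⟨x0, hx0⟩
    · rw [h]; exact Set.finite_empty
    refine Set.Finite.subset (hclass x0) ?_
    intro y hy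
    rw [Set.mem_preimage, Set.mem_singleton_iff] at hx0 hy
    exact essRel_of_phi_eq hsub (show Φ x0 = Φ y by rw [hx0, hy])
  haveI : Finite (NontrivialIdeal R) := finite_of_fibers Φ himg hfib
  exact not_finite (NontrivialIdeal R)

end Unif


theorem statement0 (R : Type*) [CommRing R] [Nontrivial R] (hR : ¬ IsField R) :
    (∃ W : Set (NontrivialIdeal R), W.Finite ∧ IsStrongResolvingSet (intersectionGraph R) W) ↔
      Finite (Ideal R) := by
  constructor
  · rintro ⟨W, hWf, hW⟩
    by_contra hfin
    rw [not_finite_iff_infinite] at hfin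
    obtain ⟨S, h1, h2⟩ := exists_infinite_mmd (R := R)
    exact not_srs h1 h2 hWf hW
  · intro hfin
    haveI := hfin
    refine ⟨Set.univ, Set.finite_univ, fun u v hne => ⟨u, trivial, Or.inr ?_⟩⟩
    rw [SimpleGraph.edist_self, zero_add]
end

section
/- Let n ≥ 2 be a positive integer and R = F_1 × ⋯ × F_n, where each F_i is a field. Then for every non-trivial ideal I of R, the ideals I and I^c are mutually maximally distant in G(R); in particular, every vertex of G(R) is mutually maximally distant from some vertex of G(R). -/
open SimpleGraph

section MyAux

variable {n : ℕ} {F : Fin n → Type*} [∀ i, Field (F i)]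

/-- The ideal of tuples supported on `S`. -/
def idealOf (F : Fin n → Type*) [∀ i, CommRing (F i)] (S : Set (Fin n)) :
    Ideal (∀ i, F i) where
  carrier := {x | ∀ i ∉ S, x i = 0}
  zero_mem' := fun i _ => rfl
  add_mem' := fun hx hy i hi => by
    simp only [Pi.add_apply, hx i hi, hy i hi, add_zero]
  smul_mem' := fun c x hx i hi => by
    simp only [Pi.smul_apply, smul_eq_mul, Pi.mul_apply, hx i hi, mul_zero]

lemma mem_idealOf {S : Set (Fin n)} {x : ∀ i, F i} :
    x ∈ idealOf F S ↔ ∀ i ∉ S, x i = 0 := Iff.rfl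

lemma single_mem_idealOf {S : Set (Fin n)} {i : Fin n} (hi : i ∈ S) (z : F i) :
    Pi.single i z ∈ idealOf F S := by
  intro j hj
  exact Pi.single_eq_of_ne (fun h : j = i => hj (h ▸ hi)) z

lemma idealOf_ne_bot {S : Set (Fin n)} (hS : S.Nonempty) : idealOf F S ≠ ⊥ := by
  obtain ⟨i, hi⟩ := hS
  intro h
  have h1 : Pi.single i (1 : F i) ∈ idealOf F S := single_mem_idealOf hi 1
  rw [h, Ideal.mem_bot] at h1
  have := congrFun h1 i
  rw [Pi.single_eq_same] at this
  exact one_ne_zero this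

lemma idealOf_empty : idealOf F (∅ : Set (Fin n)) = ⊥ := by
  ext x
  simp only [mem_idealOf, Set.mem_empty_iff_false, not_false_iff, forall_true_left,
    Ideal.mem_bot]
  constructor
  · intro h; funext i; exact h i
  · intro h i; rw [h]; rfl

lemma idealOf_ne_top {S : Set (Fin n)} (hS : Sᶜ.Nonempty) : idealOf F S ≠ ⊤ := by
  obtain ⟨i, hi⟩ := hS
  intro h
  have h1 : (1 : ∀ i, F i) ∈ idealOf F S := h ▸ Submodule.mem_top
  exact one_ne_zero (h1 i hi)

lemma idealOf_inf (S T : Set (Fin n)) :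
    idealOf F S ⊓ idealOf F T = idealOf F (S ∩ T) := by
  ext x
  simp only [Ideal.mem_inf, mem_idealOf, Set.mem_inter_iff, not_and_or]
  constructor
  · rintro ⟨h1, h2⟩ i (hi | hi)
    · exact h1 i hi
    · exact h2 i hi
  · intro h
    exact ⟨fun i hi => h i (Or.inl hi), fun i hi => h i (Or.inr hi)⟩

/-- Every ideal of a finite product of fields is the ideal of tuples supported
on its support set. -/
lemma ideal_eq_idealOf (I : Ideal (∀ i, F i)) :
    I = idealOf F {i | I.map (Pi.evalRingHom F i) ≠ ⊥} := by
  set S := {i | I.map (Pi.evalRingHom F i) ≠ ⊥} with hSdef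
  have hsingle : ∀ i ∈ S, Pi.single i (1 : F i) ∈ I := by
    intro i hi
    have hmap : I.map (Pi.evalRingHom F i) = ⊤ :=
      (Ideal.eq_bot_or_top _).resolve_left hi
    have hsurj : Function.Surjective (Pi.evalRingHom F i) :=
      fun z => ⟨Pi.single i z, Pi.single_eq_same i z⟩
    have h1 : (1 : F i) ∈ I.map (Pi.evalRingHom F i) := hmap ▸ Submodule.mem_top
    obtain ⟨y, hy, hyi⟩ := (Ideal.mem_map_iff_of_surjective _ hsurj).mp h1
    have : Pi.single i (1 : F i) = y * Pi.single i 1 := by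
      funext j
      by_cases h : j = i
      · subst h
        simp only [Pi.mul_apply, Pi.single_eq_same]
        rw [show y j = 1 from hyi, one_mul]
      · simp [Pi.single_eq_of_ne h]
    rw [this]
    exact I.mul_mem_right _ hy
  apply le_antisymm
  · intro x hx i hi
    simp only [hSdef, Set.mem_setOf_eq, not_not] at hi
    have : x i ∈ I.map (Pi.evalRingHom F i) := Ideal.mem_map_of_mem _ hx
    rwa [hi, Ideal.mem_bot] at this
  · intro x hx
    have hxsum : x = ∑ i, Pi.single i (x i) := (Finset.univ_sum_single x).symm
    rw [hxsum]
    apply Ideal.sum_mem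
    intro i _
    by_cases hi : i ∈ S
    · have : Pi.single i (x i) = Pi.single i (1 : F i) * x := by
        funext j
        by_cases h : j = i
        · subst h; simp [Pi.single_eq_same]
        · simp [Pi.single_eq_of_ne h]
      rw [this]
      exact I.mul_mem_right _ (hsingle i hi)
    · rw [hx i hi, Pi.single_zero]
      exact I.zero_mem

/-- complIdeal is the ideal of tuples supported on the complement of the support. -/
lemma complIdeal_eq (I : Ideal (∀ i, F i)) :
    complIdeal F I = idealOf F {i | I.map (Pi.evalRingHom F i) ≠ ⊥}ᶜ := by
  ext x
  simp only [complIdeal, Submodule.mem_mk, AddSubmonoid.mem_mk, AddSubsemigroup.mem_mk,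
    Set.mem_setOf_eq, mem_idealOf, Set.mem_compl_iff, not_not]

lemma two_le_edist_of_not_adj {V : Type*} {G : SimpleGraph V} {u v : V}
    (hne : u ≠ v) (hnadj : ¬ G.Adj u v) : 2 ≤ G.edist u v := by
  by_contra h
  push_neg at h
  rw [show (2 : ℕ∞) = 1 + 1 from rfl, ENat.lt_add_one_iff (by norm_num)] at h
  have h0 : G.edist u v ≠ 0 := fun hh => hne (SimpleGraph.edist_eq_zero_iff.mp hh)
  have h1 : G.edist u v = 1 := le_antisymm h (ENat.one_le_iff_ne_zero.mpr h0)
  exact hnadj (SimpleGraph.edist_eq_one_iff_adj.mp h1)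

/-- Key lemma: any neighbour of `idealOf S` is within distance 2 of `idealOf Sᶜ`. -/
lemma edist_compl_le_two (S : Set (Fin n)) (hS : S.Nonempty) (hS' : Sᶜ.Nonempty)
    (hc1 : idealOf F S ≠ ⊥ ∧ idealOf F S ≠ ⊤)
    (hc2 : idealOf F Sᶜ ≠ ⊥ ∧ idealOf F Sᶜ ≠ ⊤)
    (w : NontrivialIdeal (∀ i, F i))
    (hadj : (intersectionGraph (∀ i, F i)).Adj ⟨idealOf F S, hc1⟩ w) :
    (intersectionGraph (∀ i, F i)).edist ⟨idealOf F Sᶜ, hc2⟩ w ≤ 2 := by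
  obtain ⟨hne, hinf⟩ := hadj
  set T := {i | w.1.map (Pi.evalRingHom F i) ≠ ⊥} with hTdef
  have hw : w.1 = idealOf F T := ideal_eq_idealOf w.1
  have hbot : idealOf F S ⊓ idealOf F Sᶜ = ⊥ := by
    rw [idealOf_inf, Set.inter_compl_self, idealOf_empty]
  have hST : (S ∩ T).Nonempty := by
    by_contra h
    rw [Set.not_nonempty_iff_eq_empty] at h
    exact hinf (by rw [hw, idealOf_inf, h, idealOf_empty])
  by_cases hTc : (Sᶜ ∩ T).Nonempty
  · -- w is adjacent to idealOf Sᶜ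
    have hadj2 : (intersectionGraph (∀ i, F i)).Adj ⟨idealOf F Sᶜ, hc2⟩ w := by
      refine ⟨fun h => ?_, ?_⟩
      · have : w.1 = idealOf F Sᶜ := by rw [← h]
        rw [this] at hinf
        exact hinf hbot
      · rw [hw, idealOf_inf]
        exact idealOf_ne_bot hTc
    rw [SimpleGraph.edist_eq_one_iff_adj.mpr hadj2]
    norm_num
  · have hTS : T ⊆ S := by
      intro i hi
      by_contra h
      exact hTc ⟨i, h, hi⟩
    have hTneS : T ≠ S := by
      intro h
      apply hne
      exact Subtype.ext (by rw [hw, h])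
    obtain ⟨j, hjS, hjT⟩ := Set.exists_of_ssubset (hTS.ssubset_of_ne hTneS)
    obtain ⟨i, hiS, hiT⟩ := hST
    obtain ⟨k, hk⟩ := hS'
    have hkS : k ∉ S := hk
    have hik : ({i, k} : Set (Fin n)).Nonempty := ⟨i, Or.inl rfl⟩
    have hjik : j ∉ ({i, k} : Set (Fin n)) := by
      rintro (h | h)
      · exact hjT (h ▸ hiT)
      · exact hkS (h ▸ hjS)
    have hc3 : idealOf F ({i, k} : Set (Fin n)) ≠ ⊥ ∧ idealOf F ({i, k} : Set (Fin n)) ≠ ⊤ :=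
      ⟨idealOf_ne_bot hik, idealOf_ne_top ⟨j, hjik⟩⟩
    set K : NontrivialIdeal (∀ i, F i) := ⟨idealOf F ({i, k} : Set (Fin n)), hc3⟩ with hK
    have hadjvK : (intersectionGraph (∀ i, F i)).Adj ⟨idealOf F Sᶜ, hc2⟩ K := by
      refine ⟨fun h => ?_, ?_⟩
      · have heq : idealOf F Sᶜ = idealOf F ({i, k} : Set (Fin n)) := congrArg Subtype.val h
        have : idealOf F S ⊓ idealOf F ({i, k} : Set (Fin n)) ≠ ⊥ := by
          rw [idealOf_inf]
          exact idealOf_ne_bot ⟨i, hiS, Or.inl rfl⟩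
        rw [← heq] at this
        exact this hbot
      · show idealOf F Sᶜ ⊓ idealOf F ({i, k} : Set (Fin n)) ≠ ⊥
        rw [idealOf_inf]
        exact idealOf_ne_bot ⟨k, hk, Or.inr rfl⟩
    have hadjKw : (intersectionGraph (∀ i, F i)).Adj K w := by
      refine ⟨fun h => ?_, ?_⟩
      · have heq : idealOf F ({i, k} : Set (Fin n)) = w.1 := congrArg Subtype.val h
        have h1 : idealOf F Sᶜ ⊓ w.1 = ⊥ := by
          rw [hw, idealOf_inf,
            Set.not_nonempty_iff_eq_empty.mp hTc, idealOf_empty]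
        rw [← heq, idealOf_inf] at h1
        exact idealOf_ne_bot
          (⟨k, hk, Or.inr rfl⟩ : (Sᶜ ∩ ({i, k} : Set (Fin n))).Nonempty) h1
      · show idealOf F ({i, k} : Set (Fin n)) ⊓ w.1 ≠ ⊥
        rw [hw, idealOf_inf]
        exact idealOf_ne_bot ⟨i, Or.inl rfl, hiT⟩
    calc (intersectionGraph (∀ i, F i)).edist ⟨idealOf F Sᶜ, hc2⟩ w
        ≤ (intersectionGraph (∀ i, F i)).edist ⟨idealOf F Sᶜ, hc2⟩ K +
          (intersectionGraph (∀ i, F i)).edist K w := SimpleGraph.edist_triangle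
      _ ≤ 1 + 1 := add_le_add (SimpleGraph.edist_eq_one_iff_adj.mpr hadjvK).le
          (SimpleGraph.edist_eq_one_iff_adj.mpr hadjKw).le
      _ = 2 := rfl

lemma idealOf_compl_inf_bot (S : Set (Fin n)) :
    idealOf F S ⊓ idealOf F Sᶜ = ⊥ := by
  rw [idealOf_inf, Set.inter_compl_self, idealOf_empty]

/-- The main mutual-maximal-distance lemma for `idealOf S` and `idealOf Sᶜ`. -/
lemma mmd_idealOf (S : Set (Fin n)) (hS : S.Nonempty) (hS' : Sᶜ.Nonempty)
    (hc1 : idealOf F S ≠ ⊥ ∧ idealOf F S ≠ ⊤)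
    (hc2 : idealOf F Sᶜ ≠ ⊥ ∧ idealOf F Sᶜ ≠ ⊤) :
    MutuallyMaximallyDistant (intersectionGraph (∀ i, F i))
      ⟨idealOf F S, hc1⟩ ⟨idealOf F Sᶜ, hc2⟩ := by
  have hbot := idealOf_compl_inf_bot (F := F) S
  have hne : (⟨idealOf F S, hc1⟩ : NontrivialIdeal (∀ i, F i)) ≠ ⟨idealOf F Sᶜ, hc2⟩ := by
    intro h
    have heq : idealOf F S = idealOf F Sᶜ := congrArg Subtype.val h
    obtain ⟨i, hi⟩ := hS
    have hmem : Pi.single i (1 : F i) ∈ idealOf F Sᶜ := heq ▸ single_mem_idealOf hi 1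
    have := hmem i (Set.notMem_compl_iff.mpr hi)
    rw [Pi.single_eq_same] at this
    exact one_ne_zero this
  have hnadj : ¬ (intersectionGraph (∀ i, F i)).Adj ⟨idealOf F S, hc1⟩ ⟨idealOf F Sᶜ, hc2⟩ :=
    fun h => h.2 hbot
  have h2 := two_le_edist_of_not_adj hne hnadj
  refine ⟨hne, fun w hw => le_trans (edist_compl_le_two S hS hS' hc1 hc2 w hw) h2, fun w hw => ?_⟩
  have hS2 : Sᶜᶜ.Nonempty := by rw [compl_compl]; exact hS
  have hcc : idealOf F Sᶜᶜ ≠ ⊥ ∧ idealOf F Sᶜᶜ ≠ ⊤ := by rw [compl_compl]; exact hc1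
  have h3 := edist_compl_le_two Sᶜ hS' hS2 hc2 hcc w hw
  have heq : (⟨idealOf F Sᶜᶜ, hcc⟩ : NontrivialIdeal (∀ i, F i)) = ⟨idealOf F S, hc1⟩ :=
    Subtype.ext (show idealOf F Sᶜᶜ = idealOf F S by rw [compl_compl])
  exact le_trans (heq ▸ h3) h2

lemma first_part (I : NontrivialIdeal (∀ i, F i)) :
    ∃ hc : complIdeal F I.1 ≠ ⊥ ∧ complIdeal F I.1 ≠ ⊤,
      MutuallyMaximallyDistant (intersectionGraph (∀ i, F i)) I ⟨complIdeal F I.1, hc⟩ := by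
  set S := {i | I.1.map (Pi.evalRingHom F i) ≠ ⊥} with hSdef
  have hIS : I.1 = idealOf F S := ideal_eq_idealOf I.1
  have hS : S.Nonempty := by
    by_contra h
    rw [Set.not_nonempty_iff_eq_empty] at h
    exact I.2.1 (by rw [hIS, h, idealOf_empty])
  have hS' : Sᶜ.Nonempty := by
    by_contra h
    rw [Set.not_nonempty_iff_eq_empty, Set.compl_empty_iff] at h
    refine I.2.2 ?_
    rw [hIS, h]
    exact (Ideal.eq_top_iff_one _).mpr (fun i hi => absurd (Set.mem_univ i) hi)
  have hc1 : idealOf F S ≠ ⊥ ∧ idealOf F S ≠ ⊤ := ⟨idealOf_ne_bot hS, idealOf_ne_top hS'⟩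
  have hc2 : idealOf F Sᶜ ≠ ⊥ ∧ idealOf F Sᶜ ≠ ⊤ :=
    ⟨idealOf_ne_bot hS', idealOf_ne_top (by rw [compl_compl]; exact hS)⟩
  have hcompl : complIdeal F I.1 = idealOf F Sᶜ := complIdeal_eq I.1
  have hc : complIdeal F I.1 ≠ ⊥ ∧ complIdeal F I.1 ≠ ⊤ :=
    ⟨by rw [hcompl]; exact hc2.1, by rw [hcompl]; exact hc2.2⟩
  refine ⟨hc, ?_⟩
  have huv : I = ⟨idealOf F S, hc1⟩ := Subtype.ext hIS
  have hvv : (⟨complIdeal F I.1, hc⟩ : NontrivialIdeal (∀ i, F i)) = ⟨idealOf F Sᶜ, hc2⟩ :=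
    Subtype.ext hcompl
  rw [hvv, huv]
  exact mmd_idealOf S hS hS' hc1 hc2

end MyAux
theorem statement1 (n : ℕ) (hn : 2 ≤ n) (F : Fin n → Type*) [∀ i, Field (F i)] :
    (∀ I : NontrivialIdeal (∀ i, F i),
        ∃ hc : complIdeal F I.1 ≠ ⊥ ∧ complIdeal F I.1 ≠ ⊤,
          MutuallyMaximallyDistant (intersectionGraph (∀ i, F i)) I ⟨complIdeal F I.1, hc⟩) ∧
      (∀ I : NontrivialIdeal (∀ i, F i),
        ∃ J : NontrivialIdeal (∀ i, F i),
          MutuallyMaximallyDistant (intersectionGraph (∀ i, F i)) I J) := by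
  refine ⟨fun I => first_part I, fun I => ?_⟩
  obtain ⟨hc, h⟩ := first_part I
  exact ⟨⟨complIdeal F I.1, hc⟩, h⟩
end

section
/- Let m ≥ 2 be a positive integer and R = R_1 × ⋯ × R_m, where each R_i is a commutative Artinian local principal ideal ring that is not a field. Then every non-trivial ideal of R is mutually maximally distant in G(R) from some non-trivial ideal of R; in particular, the vertex set of the strong resolving graph G(R)_SR equals the vertex set of G(R). -/
open SimpleGraph

section LocalLemma

/-- In an Artinian local principal ideal ring that is not a field, there is a nonzero
non-unit element contained in every nonzero ideal. -/
lemma exists_socle_elt (A : Type*) [CommRing A] [IsArtinianRing A] [IsLocalRing A]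
    [IsPrincipalIdealRing A] (h : ¬ IsField A) :
    ∃ s : A, s ≠ 0 ∧ ¬ IsUnit s ∧ ∀ N : Ideal A, N ≠ ⊥ → s ∈ N := by
  obtain ⟨t, ht⟩ := Submodule.IsPrincipal.principal (IsLocalRing.maximalIdeal A)
  have hmne : IsLocalRing.maximalIdeal A ≠ ⊥ :=
    fun hb => h (IsLocalRing.isField_iff_maximalIdeal_eq.mpr hb)
  have htne : t ≠ 0 := by
    rintro rfl
    exact hmne (by rw [ht]; simp)
  have htm : t ∈ IsLocalRing.maximalIdeal A := ht ▸ Ideal.mem_span_singleton_self t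
  have hnil : ∃ n, t ^ n = 0 := by
    obtain ⟨n, hn⟩ := IsArtinianRing.isNilpotent_jacobson_bot (R := A)
    rw [IsLocalRing.jacobson_eq_maximalIdeal (⊥ : Ideal A) bot_ne_top] at hn
    exact ⟨n, by
      have := Ideal.pow_mem_pow htm n
      rw [hn] at this
      simpa using this⟩
  classical
  set e := Nat.find hnil with he_def
  have he : t ^ e = 0 := Nat.find_spec hnil
  have hlt : ∀ k < e, t ^ k ≠ 0 := fun k hk => Nat.find_min hnil hk
  have hepos : 0 < e := by
    rcases Nat.eq_zero_or_pos e with h0 | h0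
    · exfalso; rw [h0, pow_zero] at he; exact one_ne_zero he
    · exact h0
  have he2 : 2 ≤ e := by
    rcases Nat.lt_or_ge e 2 with h2 | h2
    · interval_cases e
      · exact absurd he (by simpa using htne)
    · exact h2
  have hs0 : t ^ (e - 1) ≠ 0 := hlt _ (by omega)
  have hkey : ∀ n, ∀ a : A, a ≠ 0 → t ^ (e - n) ∣ a → t ^ (e - 1) ∈ Ideal.span {a} := by
    intro n
    induction n with
    | zero =>
      intro a ha hd
      simp only [Nat.sub_zero, he, zero_dvd_iff] at hd
      exact absurd hd ha
    | succ n ih =>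
      intro a ha hd
      obtain ⟨b, rfl⟩ := hd
      by_cases hb : IsUnit b
      · rw [Ideal.span_singleton_mul_right_unit hb]
        have htk : t ^ (e - (n + 1)) ≠ 0 := fun h0 => ha (by rw [h0, zero_mul])
        have hke : e - (n + 1) < e := by
          by_contra hc
          push_neg at hc
          have : e - (n + 1) = e := by omega
          exact htk (by rw [this]; exact he)
        exact Ideal.mem_span_singleton.mpr (pow_dvd_pow t (by omega))
      · have hbm : b ∈ IsLocalRing.maximalIdeal A := (IsLocalRing.mem_maximalIdeal b).mpr hb
        rw [ht] at hbm
        obtain ⟨c, rfl⟩ := Ideal.mem_span_singleton.mp hbm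
        refine ih _ ha ?_
        refine dvd_trans (pow_dvd_pow t (by omega : e - n ≤ e - (n + 1) + 1)) ⟨c, by ring⟩
  refine ⟨t ^ (e - 1), hs0, ?_, ?_⟩
  · intro hu
    have : t ^ (e - 1) ∈ IsLocalRing.maximalIdeal A := by
      rw [ht]
      exact Ideal.mem_span_singleton.mpr (dvd_pow_self t (by omega))
    exact ((IsLocalRing.mem_maximalIdeal _).mp this) hu
  · intro N hN
    obtain ⟨a, haN, ha⟩ := Submodule.exists_mem_ne_zero_of_ne_bot hN
    have := hkey e a ha (by simpa using one_dvd a)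
    exact (Ideal.span_singleton_le_iff_mem N).mpr haN this

end LocalLemma

section PiLemmas

variable {ι : Type*} [Fintype ι] [DecidableEq ι] {F : ι → Type*} [∀ i, CommRing (F i)]

lemma mem_iff_proj (I : Ideal (∀ i, F i)) (x : ∀ i, F i) :
    x ∈ I ↔ ∀ i, x i ∈ I.map (Pi.evalRingHom F i) := by
  constructor
  · exact fun hx i => Ideal.mem_map_of_mem _ hx
  · intro hx
    rw [← Finset.univ_sum_single x]
    refine Submodule.sum_mem _ fun i _ => ?_
    have hsurj : Function.Surjective (Pi.evalRingHom F i) :=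
      fun a => ⟨Pi.single i a, Pi.single_eq_same i a⟩
    obtain ⟨y, hyI, hy⟩ := (Ideal.mem_map_iff_of_surjective _ hsurj).mp (hx i)
    have hone : Pi.single i (x i) = y * Pi.single i 1 := by
      funext j
      by_cases hj : j = i
      · subst hj
        simpa using hy.symm
      · simp [Pi.single_eq_of_ne hj]
    rw [hone]
    exact I.mul_mem_right _ hyI

/-- The product ideal with prescribed components. -/
def piIdeal (A : ∀ i, Ideal (F i)) : Ideal (∀ i, F i) where
  carrier := {x | ∀ i, x i ∈ A i}
  zero_mem' := fun i => (A i).zero_mem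
  add_mem' := fun hx hy i => (A i).add_mem (hx i) (hy i)
  smul_mem' := fun c x hx i => by
    simpa using (A i).smul_mem (c i) (hx i)

lemma mem_piIdeal {A : ∀ i, Ideal (F i)} {x : ∀ i, F i} :
    x ∈ piIdeal A ↔ ∀ i, x i ∈ A i := Iff.rfl

end PiLemmas

theorem statement7 (m : ℕ) (hm : 2 ≤ m) (R : Fin m → Type*) [∀ i, CommRing (R i)]
    [∀ i, IsArtinianRing (R i)] [∀ i, IsLocalRing (R i)] [∀ i, IsPrincipalIdealRing (R i)]
    (hnf : ∀ i, ¬ IsField (R i)) :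
    ∀ I : NontrivialIdeal (∀ i, R i), ∃ J : NontrivialIdeal (∀ i, R i),
      MutuallyMaximallyDistant (intersectionGraph (∀ i, R i)) I J := by
  classical
  choose s hs0 hsu hsmem using fun i => exists_socle_elt (R i) (hnf i)
  set G := intersectionGraph (∀ i, R i) with hG
  -- basic facts
  have hproj_bot : ∀ K : Ideal (∀ i, R i), K ≠ ⊥ → ∃ i, K.map (Pi.evalRingHom R i) ≠ ⊥ := by
    intro K hK
    obtain ⟨x, hxK, hx⟩ := Submodule.exists_mem_ne_zero_of_ne_bot hK
    obtain ⟨i, hi⟩ : ∃ i, x i ≠ 0 := by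
      by_contra hc
      push_neg at hc
      exact hx (funext hc)
    exact ⟨i, (Submodule.ne_bot_iff _).mpr ⟨x i, Ideal.mem_map_of_mem _ hxK, hi⟩⟩
  have hsingle_mem : ∀ (K : Ideal (∀ i, R i)) i, K.map (Pi.evalRingHom R i) ≠ ⊥ →
      Pi.single i (s i) ∈ K := by
    intro K i hi
    rw [mem_iff_proj]
    intro j
    by_cases hj : j = i
    · subst hj
      rw [Pi.single_eq_same]
      exact hsmem j _ hi
    · rw [Pi.single_eq_of_ne hj]
      exact Submodule.zero_mem _
  have hsingle_ne : ∀ i, Pi.single i (s i) ≠ (0 : ∀ i, R i) := by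
    intro i h
    exact hs0 i (by simpa using congrFun h i)
  -- universal adjacency for ideals containing all singles
  have huniv : ∀ u : NontrivialIdeal (∀ i, R i), (∀ i, Pi.single i (s i) ∈ u.1) →
      ∀ v : NontrivialIdeal (∀ i, R i), v ≠ u → G.Adj u v := by
    intro u hu v hv
    obtain ⟨i, hi⟩ := hproj_bot v.1 v.2.1
    exact ⟨hv.symm, (Submodule.ne_bot_iff _).mpr
      ⟨Pi.single i (s i), Submodule.mem_inf.mpr ⟨hu i, hsingle_mem v.1 i hi⟩, hsingle_ne i⟩⟩
  have hedist1 : ∀ u : NontrivialIdeal (∀ i, R i), (∀ i, Pi.single i (s i) ∈ u.1) →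
      ∀ v : NontrivialIdeal (∀ i, R i), G.edist u v ≤ 1 := by
    intro u hu v
    by_cases hv : v = u
    · subst hv
      rw [G.edist_comm]
      exact le_of_eq_of_le (SimpleGraph.edist_eq_zero_iff.mpr rfl) (by norm_num)
    · exact le_of_eq (SimpleGraph.edist_eq_one_iff_adj.mpr (huniv u hu v hv))
  -- the reference full-support vertex K₀
  set K₀ : Ideal (∀ i, R i) := piIdeal (fun i => Ideal.span {s i}) with hK₀def
  have hK₀hyp : ∀ i, Pi.single i (s i) ∈ K₀ := by
    intro i j
    by_cases hj : j = i
    · subst hj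
      rw [Pi.single_eq_same]
      exact Ideal.mem_span_singleton_self _
    · rw [Pi.single_eq_of_ne hj]
      exact Submodule.zero_mem _
  set i0 : Fin m := ⟨0, by omega⟩ with hi0
  set i1 : Fin m := ⟨1, by omega⟩ with hi1
  have hK₀bot : K₀ ≠ ⊥ := (Submodule.ne_bot_iff _).mpr ⟨_, hK₀hyp i0, hsingle_ne i0⟩
  have hK₀top : K₀ ≠ ⊤ := by
    intro h
    have h1 : (1 : ∀ i, R i) ∈ K₀ := h ▸ Submodule.mem_top
    have := h1 i0
    simp only [Pi.one_apply] at this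
    exact hsu i0 (isUnit_of_dvd_one (Ideal.mem_span_singleton.mp this))
  set vK₀ : NontrivialIdeal (∀ i, R i) := ⟨K₀, hK₀bot, hK₀top⟩ with hvK₀
  -- all distances are at most 2
  have hall2 : ∀ u v : NontrivialIdeal (∀ i, R i), G.edist u v ≤ 2 := by
    intro u v
    calc G.edist u v ≤ G.edist u vK₀ + G.edist vK₀ v := G.edist_triangle
    _ ≤ 1 + 1 := by
        refine add_le_add ?_ (hedist1 vK₀ hK₀hyp v)
        rw [G.edist_comm]
        exact hedist1 vK₀ hK₀hyp u
    _ = 2 := by norm_num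
  intro I
  by_cases hfull : ∀ i, I.1.map (Pi.evalRingHom R i) ≠ ⊥
  · -- Case 2: full support; I is a universal vertex, pick another universal vertex.
    have hIhyp : ∀ i, Pi.single i (s i) ∈ I.1 := fun i => hsingle_mem I.1 i (hfull i)
    set J₂ : Ideal (∀ i, R i) :=
      piIdeal (fun i => if i = i1 then ⊤ else Ideal.span {s i}) with hJ₂def
    have hJ₂hyp : ∀ i, Pi.single i (s i) ∈ J₂ := by
      intro i j
      by_cases hj : j = i
      · subst hj
        rw [Pi.single_eq_same]
        by_cases hji : j = i1 <;> simp [hji, Ideal.mem_span_singleton_self]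
      · rw [Pi.single_eq_of_ne hj]
        exact Submodule.zero_mem _
    have hi01 : i0 ≠ i1 := by
      intro h
      rw [hi0, hi1] at h
      have : (0 : ℕ) = 1 := congrArg Fin.val h
      omega
    have hJ₂bot : J₂ ≠ ⊥ := (Submodule.ne_bot_iff _).mpr ⟨_, hJ₂hyp i0, hsingle_ne i0⟩
    have hJ₂top : J₂ ≠ ⊤ := by
      intro h
      have h1 : (1 : ∀ i, R i) ∈ J₂ := h ▸ Submodule.mem_top
      have := h1 i0
      simp only [Pi.one_apply, if_neg hi01] at this
      exact hsu i0 (isUnit_of_dvd_one (Ideal.mem_span_singleton.mp this))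
    have hs1 : Pi.single i1 (1 : R i1) ∈ J₂ := by
      intro j
      by_cases hj : j = i1
      · subst hj
        simp
      · rw [Pi.single_eq_of_ne hj]
        exact Submodule.zero_mem _
    have hJ₂K₀ : J₂ ≠ K₀ := by
      intro h
      have : Pi.single i1 (1 : R i1) ∈ K₀ := h ▸ hs1
      have := this i1
      rw [Pi.single_eq_same] at this
      exact hsu i1 (isUnit_of_dvd_one (Ideal.mem_span_singleton.mp this))
    set vJ₂ : NontrivialIdeal (∀ i, R i) := ⟨J₂, hJ₂bot, hJ₂top⟩ with hvJ₂
    obtain ⟨J, hJhyp, hJneI⟩ : ∃ J : NontrivialIdeal (∀ i, R i),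
        (∀ i, Pi.single i (s i) ∈ J.1) ∧ J ≠ I := by
      by_cases hIK : I = vK₀
      · exact ⟨vJ₂, hJ₂hyp, fun h => hJ₂K₀ (congrArg Subtype.val (h.trans hIK))⟩
      · exact ⟨vK₀, hK₀hyp, fun h => hIK h.symm⟩
    refine ⟨J, hJneI.symm, ?_, ?_⟩
    · intro w hw
      refine le_trans (hedist1 J hJhyp w) ?_
      exact ENat.one_le_iff_ne_zero.mpr (SimpleGraph.edist_eq_zero_iff.ne.mpr hJneI.symm)
    · intro w hw
      refine le_trans (hedist1 I hIhyp w) ?_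
      exact ENat.one_le_iff_ne_zero.mpr (SimpleGraph.edist_eq_zero_iff.ne.mpr hJneI.symm)
  · -- Case 1: some component is zero; take the complementary ideal.
    push_neg at hfull
    obtain ⟨i₂, hi₂⟩ := hfull
    set J₀ : Ideal (∀ i, R i) := complIdeal R I.1 with hJ₀def
    have hJ₀bot : J₀ ≠ ⊥ := by
      refine (Submodule.ne_bot_iff _).mpr ⟨Pi.single i₂ 1, ?_, ?_⟩
      · intro j hj
        have hji : j ≠ i₂ := fun h => hj (h ▸ hi₂)
        exact Pi.single_eq_of_ne hji 1
      · intro h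
        exact (one_ne_zero : (1 : R i₂) ≠ 0) (by simpa using congrFun h i₂)
    have hJ₀top : J₀ ≠ ⊤ := by
      intro h
      obtain ⟨i, hi⟩ := hproj_bot I.1 I.2.1
      have h1 : (1 : ∀ i, R i) ∈ J₀ := h ▸ Submodule.mem_top
      exact (one_ne_zero : (1 : R i) ≠ 0) (h1 i hi)
    have hinf : I.1 ⊓ J₀ = ⊥ := by
      refine (Submodule.eq_bot_iff _).mpr fun x hx => ?_
      obtain ⟨hxI, hxJ⟩ := Submodule.mem_inf.mp hx
      funext i
      by_cases hi : I.1.map (Pi.evalRingHom R i) ≠ ⊥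
      · exact hxJ i hi
      · push_neg at hi
        have : x i ∈ I.1.map (Pi.evalRingHom R i) := Ideal.mem_map_of_mem _ hxI
        rw [hi] at this
        simpa using this
    have hneJ : I.1 ≠ J₀ := by
      intro h
      refine I.2.1 ?_
      calc I.1 = I.1 ⊓ I.1 := (inf_idem _).symm
      _ = ⊥ := by rw [h]; rw [h] at hinf; exact hinf
    set vJ : NontrivialIdeal (∀ i, R i) := ⟨J₀, hJ₀bot, hJ₀top⟩ with hvJ
    have hneIJ : I ≠ vJ := fun h => hneJ (congrArg Subtype.val h)
    have h2le : 2 ≤ G.edist I vJ := by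
      by_contra hc
      push_neg at hc
      have hle1 : G.edist I vJ ≤ 1 := by
        have h2 : (2 : ℕ∞) = 1 + 1 := by norm_num
        rw [h2] at hc
        exact (ENat.lt_add_one_iff (by norm_num)).mp hc
      have hne0 : G.edist I vJ ≠ 0 := SimpleGraph.edist_eq_zero_iff.ne.mpr hneIJ
      have heq1 : G.edist I vJ = 1 := le_antisymm hle1 (ENat.one_le_iff_ne_zero.mpr hne0)
      exact (SimpleGraph.edist_eq_one_iff_adj.mp heq1).2 hinf
    exact ⟨vJ, hneIJ, fun w hw => le_trans (hall2 vJ w) h2le,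
      fun w hw => le_trans (hall2 I w) h2le⟩
end

section
/- Let m ≥ 2 be a positive integer and R = R_1 × ⋯ × R_m, where each R_i is a commutative Artinian local principal ideal ring that is not a field. If I = I_1 × ⋯ × I_m and J = J_1 × ⋯ × J_m are distinct non-trivial ideals of R with the same zero-pattern (for every i, I_i = 0 if and only if J_i = 0), then I and J are mutually maximally distant in G(R). -/
open SimpleGraph

/-- In a local Artinian PIR, any two nonzero ideals intersect nontrivially. -/
lemma inf_ne_bot_of_artinian_local_pir {S : Type*} [CommRing S] [IsArtinianRing S]
    [IsLocalRing S] [IsPrincipalIdealRing S] {A B : Ideal S} (hA : A ≠ ⊥) (hB : B ≠ ⊥) :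
    A ⊓ B ≠ ⊥ := by
  classical
  obtain ⟨π, hπ⟩ := (IsPrincipalIdealRing.principal (IsLocalRing.maximalIdeal S)).principal
  -- m is nilpotent
  obtain ⟨N, hN⟩ := IsArtinianRing.isNilpotent_jacobson_bot (R := S)
  rw [IsLocalRing.jacobson_eq_maximalIdeal ⊥ bot_ne_top, hπ] at hN
  have hπN : π ^ N = 0 := by
    have h1 : π ∈ (Submodule.span S {π} : Ideal S) := Submodule.mem_span_singleton_self π
    have := Ideal.pow_mem_pow h1 N
    rw [hN] at this
    simpa using this
  have hex : ∃ k, π ^ k = 0 := ⟨N, hπN⟩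
  set n := Nat.find hex with hn
  have hn0 : π ^ n = 0 := Nat.find_spec hex
  have hn1 : 1 ≤ n := by
    rcases Nat.eq_zero_or_pos n with h | h
    · exfalso; rw [h, pow_zero] at hn0; exact one_ne_zero hn0
    · exact h
  have ht : π ^ (n - 1) ≠ 0 := Nat.find_min hex (Nat.sub_lt hn1 one_pos)
  -- every nonzero element divides π^(n-1) up to unit, i.e. π^(n-1) ∈ span {a}
  have key : ∀ a : S, a ≠ 0 → π ^ (n - 1) ∈ Ideal.span {a} := by
    intro a ha
    have hexk : ∃ k, a ∉ Ideal.span {π ^ k} := by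
      refine ⟨n, ?_⟩
      rw [hn0, Ideal.span_singleton_eq_bot.mpr rfl]
      simpa using ha
    set k0 := Nat.find hexk with hk0
    have hk0spec : a ∉ Ideal.span {π ^ k0} := Nat.find_spec hexk
    have hk01 : 1 ≤ k0 := by
      rcases Nat.eq_zero_or_pos k0 with h | h
      · exfalso; apply hk0spec; rw [h, pow_zero, Ideal.span_singleton_one]; trivial
      · exact h
    have hk0le : k0 ≤ n := Nat.find_le (by
      rw [hn0, Ideal.span_singleton_eq_bot.mpr rfl]; simpa using ha)
    set k := k0 - 1 with hk
    have hmem : a ∈ Ideal.span {π ^ k} := by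
      by_contra h
      have : k0 ≤ k := Nat.find_le h
      omega
    obtain ⟨c, hc⟩ := Ideal.mem_span_singleton.mp hmem
    have hcu : IsUnit c := by
      by_contra hcu
      apply hk0spec
      have hcm : c ∈ Ideal.span {π} := by
        have h2 : c ∈ IsLocalRing.maximalIdeal S := (IsLocalRing.mem_maximalIdeal c).mpr hcu
        rwa [hπ] at h2
      obtain ⟨d, hd⟩ := Ideal.mem_span_singleton.mp hcm
      rw [Ideal.mem_span_singleton]
      refine ⟨d, ?_⟩
      have : k0 = k + 1 := by omega
      rw [this, hc, hd, pow_succ]; ring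
    -- a = π^k * c with c unit, so π^k = a * c⁻¹, and π^(n-1) = π^k * π^(n-1-k)
    rw [Ideal.mem_span_singleton]
    obtain ⟨u, hu⟩ := hcu
    refine ⟨↑u⁻¹ * π ^ (n - 1 - k), ?_⟩
    have h1 : a * ↑u⁻¹ = π ^ k := by
      rw [hc, ← hu, mul_assoc, Units.mul_inv, mul_one]
    calc π ^ (n-1) = π ^ k * π ^ (n - 1 - k) := by rw [← pow_add]; congr 1; omega
    _ = a * (↑u⁻¹ * π ^ (n - 1 - k)) := by rw [← h1]; ring
  obtain ⟨a, haA, ha⟩ := Submodule.exists_mem_ne_zero_of_ne_bot hA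
  obtain ⟨b, hbB, hb⟩ := Submodule.exists_mem_ne_zero_of_ne_bot hB
  intro h
  apply ht
  have h1 : π ^ (n-1) ∈ A := A.span_singleton_le_iff_mem.mpr haA (key a ha)
  have h2 : π ^ (n-1) ∈ B := B.span_singleton_le_iff_mem.mpr hbB (key b hb)
  have : π ^ (n-1) ∈ A ⊓ B := ⟨h1, h2⟩
  rw [h] at this
  simpa using this


lemma single_mem_of_mem_map {m : ℕ} {R : Fin m → Type*} [∀ i, CommRing (R i)]
    {I : Ideal (∀ i, R i)} {i : Fin m} {z : R i}
    (hz : z ∈ I.map (Pi.evalRingHom R i)) : Pi.single i z ∈ I := by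
  obtain ⟨a, haI, ha⟩ :=
    (Ideal.mem_map_iff_of_surjective _ (Function.surjective_eval i)).mp hz
  have h : Pi.single i z = Pi.single i (1 : R i) * a := by
    funext j
    by_cases hji : j = i
    · subst hji; simp [ha.symm]
    · simp [Pi.single_apply, hji]
  rw [h]
  exact I.mul_mem_left _ haI

lemma mem_map_of_apply {m : ℕ} {R : Fin m → Type*} [∀ i, CommRing (R i)]
    {I : Ideal (∀ i, R i)} {x : ∀ i, R i} (hx : x ∈ I) (i : Fin m) :
    x i ∈ I.map (Pi.evalRingHom R i) :=
  Ideal.mem_map_of_mem _ hx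

lemma map_ne_bot_of {m : ℕ} {R : Fin m → Type*} [∀ i, CommRing (R i)]
    {I : Ideal (∀ i, R i)} {x : ∀ i, R i} (hx : x ∈ I) {i : Fin m} (hxi : x i ≠ 0) :
    I.map (Pi.evalRingHom R i) ≠ ⊥ := fun h => hxi (by
  have := mem_map_of_apply hx i
  rw [h] at this
  simpa using this)


theorem statement8 (m : ℕ) (hm : 2 ≤ m) (R : Fin m → Type*) [∀ i, CommRing (R i)]
    [∀ i, IsArtinianRing (R i)] [∀ i, IsLocalRing (R i)] [∀ i, IsPrincipalIdealRing (R i)]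
    (hnf : ∀ i, ¬ IsField (R i))
    (I J : NontrivialIdeal (∀ i, R i)) (hIJ : I ≠ J)
    (hzp : ∀ i, I.1.map (Pi.evalRingHom R i) = ⊥ ↔ J.1.map (Pi.evalRingHom R i) = ⊥) :
    MutuallyMaximallyDistant (intersectionGraph (∀ i, R i)) I J := by
  classical
  have key : ∀ (A B : Ideal (∀ i, R i)) (i : Fin m),
      A.map (Pi.evalRingHom R i) ≠ ⊥ → B.map (Pi.evalRingHom R i) ≠ ⊥ → A ⊓ B ≠ ⊥ := by
    intro A B i hA hB
    obtain ⟨z, hz, hz0⟩ :=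
      Submodule.exists_mem_ne_zero_of_ne_bot (inf_ne_bot_of_artinian_local_pir hA hB)
    intro hbot
    have h1 : Pi.single i z ∈ A := single_mem_of_mem_map hz.1
    have h2 : Pi.single i z ∈ B := single_mem_of_mem_map hz.2
    have hmem : Pi.single i z ∈ A ⊓ B := ⟨h1, h2⟩
    rw [hbot] at hmem
    apply hz0
    have h0 : Pi.single i z = 0 := (Submodule.mem_bot _).mp hmem
    have := congrFun h0 i
    simpa using this
  obtain ⟨x, hxI, hx0⟩ := Submodule.exists_mem_ne_zero_of_ne_bot I.2.1
  obtain ⟨i, hxi⟩ := Function.ne_iff.mp hx0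
  have hIi : I.1.map (Pi.evalRingHom R i) ≠ ⊥ := map_ne_bot_of hxI (by simpa using hxi)
  have hJi : J.1.map (Pi.evalRingHom R i) ≠ ⊥ := fun h => hIi ((hzp i).mpr h)
  have hadj : (intersectionGraph (∀ i, R i)).Adj I J :=
    (show I ≠ J ∧ I.1 ⊓ J.1 ≠ ⊥ from ⟨hIJ, key _ _ i hIi hJi⟩)
  have hedist1 : (intersectionGraph (∀ i, R i)).edist I J = 1 :=
    SimpleGraph.edist_eq_one_iff_adj.mpr hadj
  refine ⟨hIJ, ?_, ?_⟩
  · intro w hw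
    rw [hedist1]
    rcases eq_or_ne w J with rfl | hwJ
    · simp
    · refine le_of_eq (SimpleGraph.edist_eq_one_iff_adj.mpr ?_)
      obtain ⟨y, hyIw, hy0⟩ :=
        Submodule.exists_mem_ne_zero_of_ne_bot (show I ≠ w ∧ I.1 ⊓ w.1 ≠ ⊥ from hw).2
      obtain ⟨j, hyj⟩ := Function.ne_iff.mp hy0
      have hIj : I.1.map (Pi.evalRingHom R j) ≠ ⊥ := map_ne_bot_of hyIw.1 (by simpa using hyj)
      have hwj : w.1.map (Pi.evalRingHom R j) ≠ ⊥ := map_ne_bot_of hyIw.2 (by simpa using hyj)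
      have hJj : J.1.map (Pi.evalRingHom R j) ≠ ⊥ := fun h => hIj ((hzp j).mpr h)
      exact (show J ≠ w ∧ J.1 ⊓ w.1 ≠ ⊥ from ⟨hwJ.symm, key _ _ j hJj hwj⟩)
  · intro w hw
    rw [hedist1]
    rcases eq_or_ne w I with rfl | hwI
    · simp
    · refine le_of_eq (SimpleGraph.edist_eq_one_iff_adj.mpr ?_)
      obtain ⟨y, hyJw, hy0⟩ :=
        Submodule.exists_mem_ne_zero_of_ne_bot (show J ≠ w ∧ J.1 ⊓ w.1 ≠ ⊥ from hw).2
      obtain ⟨j, hyj⟩ := Function.ne_iff.mp hy0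
      have hJj : J.1.map (Pi.evalRingHom R j) ≠ ⊥ := map_ne_bot_of hyJw.1 (by simpa using hyj)
      have hwj : w.1.map (Pi.evalRingHom R j) ≠ ⊥ := map_ne_bot_of hyJw.2 (by simpa using hyj)
      have hIj : I.1.map (Pi.evalRingHom R j) ≠ ⊥ := fun h => hJj ((hzp j).mp h)
      exact (show I ≠ w ∧ I.1 ⊓ w.1 ≠ ⊥ from ⟨hwI.symm, key _ _ j hIj hwj⟩)
end

section
/- Let m ≥ 2 be a positive integer and R = R_1 × ⋯ × R_m, where each R_i is a commutative Artinian local principal ideal ring that is not a field. If I = I_1 × ⋯ × I_m and J = J_1 × ⋯ × J_m are non-trivial ideals of R with different zero-patterns (there exists i with exactly one of I_i, J_i equal to 0), then I and J are mutually maximally distant in G(R) if and only if I ∩ J = 0 (equivalently, if and only if I and J are not adjacent in G(R)). -/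
open SimpleGraph

section aux
lemma exists_soc (A : Type*) [CommRing A] [IsArtinianRing A] [IsLocalRing A]
    [IsPrincipalIdealRing A] (hnf : ¬ IsField A) :
    ∃ s : A, s ≠ 0 ∧ ¬ IsUnit s ∧ ∀ K : Ideal A, K ≠ ⊥ → s ∈ K := by
  obtain ⟨π, hπ⟩ := (IsPrincipalIdealRing.principal (IsLocalRing.maximalIdeal A)).principal
  have hπ0 : π ≠ 0 := by
    intro h
    apply hnf
    rw [IsLocalRing.isField_iff_maximalIdeal_eq, hπ, h]
    exact Ideal.span_singleton_eq_bot.mpr rfl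
  have hnil : ∃ n, π ^ n = 0 := by
    obtain ⟨n, hn⟩ := IsArtinianRing.isNilpotent_jacobson_bot (R := A)
    refine ⟨n, ?_⟩
    have : π ∈ IsLocalRing.maximalIdeal A := hπ ▸ Ideal.mem_span_singleton_self π
    have h2 : π ^ n ∈ (IsLocalRing.maximalIdeal A) ^ n := Ideal.pow_mem_pow this n
    rw [← IsLocalRing.jacobson_eq_maximalIdeal (⊥ : Ideal A) bot_ne_top, hn] at h2
    simpa using h2
  classical
  set n := Nat.find hnil with hn
  have hπn : π ^ n = 0 := Nat.find_spec hnil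
  have hn1 : 1 ≤ n := by
    rcases Nat.eq_zero_or_pos n with h | h
    · exfalso; rw [h, pow_zero] at hπn; exact one_ne_zero hπn
    · exact h
  have hs0 : π ^ (n - 1) ≠ 0 := Nat.find_min hnil (by omega)
  refine ⟨π ^ (n - 1), hs0, ?_, ?_⟩
  · intro hu
    apply hπ0
    have : π ^ (n - 1) * π = 0 := by
      rw [← pow_succ]; rw [show n - 1 + 1 = n by omega]; exact hπn
    exact (IsUnit.mul_right_eq_zero hu).mp this
  · intro K hK
    obtain ⟨a, ha⟩ := (IsPrincipalIdealRing.principal K).principal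
    have ha0 : a ≠ 0 := by
      intro h; apply hK; rw [ha, h]; exact Ideal.span_singleton_eq_bot.mpr rfl
    rw [ha]
    have hex : ∃ k, a ∉ Ideal.span {π ^ (k + 1)} := by
      refine ⟨n - 1, ?_⟩
      rw [show n - 1 + 1 = n by omega, hπn]
      simp [Ideal.span_singleton_eq_bot.mpr rfl, ha0]
    set k := Nat.find hex with hk
    have hknot : a ∉ Ideal.span {π ^ (k + 1)} := Nat.find_spec hex
    have hkin : a ∈ Ideal.span {π ^ k} := by
      rcases Nat.eq_zero_or_pos k with h | h
      · rw [h]; simp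
      · have := Nat.find_min hex (m := k - 1) (by omega)
        rw [not_not] at this
        rwa [show k - 1 + 1 = k by omega] at this
    obtain ⟨c, hc⟩ := Ideal.mem_span_singleton'.mp hkin
    have hcu : IsUnit c := by
      by_contra hcu
      have hcm : c ∈ IsLocalRing.maximalIdeal A := hcu
      rw [hπ] at hcm
      obtain ⟨d, hd⟩ := Ideal.mem_span_singleton'.mp hcm
      apply hknot
      refine Ideal.mem_span_singleton'.mpr ⟨d, ?_⟩
      rw [← hc, ← hd]; ring
    have hkn : k < n := by
      by_contra h
      push_neg at h
      apply ha0
      have : π ^ k = 0 := by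
        rw [show k = n + (k - n) by omega, pow_add, hπn, zero_mul]
      rw [← hc, this, mul_zero]
    obtain ⟨u, hu⟩ := hcu
    refine Ideal.mem_span_singleton'.mpr ⟨↑u⁻¹ * π ^ (n - 1 - k), ?_⟩
    rw [← hc, ← hu]
    calc ↑u⁻¹ * π ^ (n - 1 - k) * (↑u * π ^ k)
        = (↑u⁻¹ * ↑u) * (π ^ (n - 1 - k) * π ^ k) := by ring
      _ = π ^ (n - 1 - k + k) := by rw [Units.inv_mul, one_mul, pow_add]
      _ = π ^ (n - 1) := by rw [Nat.sub_add_cancel (by omega)]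

variable {m : ℕ} {R : Fin m → Type*} [∀ i, CommRing (R i)]

lemma single_mem_of_mem {L : Ideal (∀ i, R i)} {y : ∀ i, R i} (hy : y ∈ L) (i : Fin m) :
    Pi.single i (y i) ∈ L := by
  have : Pi.single i (y i) = Pi.single i (1 : R i) * y := by
    funext j
    by_cases h : j = i
    · subst h; simp
    · simp [Pi.single_apply, h]
  rw [this]
  exact L.mul_mem_left _ hy

lemma eval_surj (i : Fin m) : Function.Surjective (Pi.evalRingHom R i) :=
  fun x => ⟨Pi.single i x, by simp⟩

lemma apply_eq_zero_of_map_eq_bot {L : Ideal (∀ i, R i)} {i : Fin m}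
    (h : L.map (Pi.evalRingHom R i) = ⊥) {y : ∀ i, R i} (hy : y ∈ L) : y i = 0 := by
  have : y i ∈ L.map (Pi.evalRingHom R i) := Ideal.mem_map_of_mem _ hy
  rw [h] at this
  simpa using this

lemma map_eval_ne_bot_of_apply_ne_zero {L : Ideal (∀ i, R i)} {i : Fin m}
    {y : ∀ i, R i} (hy : y ∈ L) (h : y i ≠ 0) : L.map (Pi.evalRingHom R i) ≠ ⊥ := by
  intro hb
  exact h (apply_eq_zero_of_map_eq_bot hb hy)

end aux

theorem statement9 (m : ℕ) (hm : 2 ≤ m) (R : Fin m → Type*) [∀ i, CommRing (R i)]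
    [∀ i, IsArtinianRing (R i)] [∀ i, IsLocalRing (R i)] [∀ i, IsPrincipalIdealRing (R i)]
    (hnf : ∀ i, ¬ IsField (R i))
    (I J : NontrivialIdeal (∀ i, R i))
    (hzp : ∃ i, ¬ (I.1.map (Pi.evalRingHom R i) = ⊥ ↔ J.1.map (Pi.evalRingHom R i) = ⊥)) :
    MutuallyMaximallyDistant (intersectionGraph (∀ i, R i)) I J ↔ I.1 ⊓ J.1 = ⊥ := by
  classical
  set G := intersectionGraph (∀ i, R i) with hG
  choose s hs0 hsu hsmem using fun i => exists_soc (R i) (hnf i)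
  set S : Fin m → Ideal (∀ i, R i) := fun i => Ideal.span {Pi.single i (s i)} with hS
  have hsingle0 : ∀ i, Pi.single i (s i) ≠ (0 : ∀ i, R i) := by
    intro i h
    apply hs0 i
    have := congrFun h i
    simpa using this
  have hSbot : ∀ i, S i ≠ ⊥ := fun i =>
    fun h => hsingle0 i (Ideal.span_singleton_eq_bot.mp h)
  have hStop : ∀ i, S i ≠ ⊤ := by
    intro i h
    have h1 : (1 : ∀ i, R i) ∈ S i := h ▸ Submodule.mem_top
    obtain ⟨c, hc⟩ := Ideal.mem_span_singleton'.mp h1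
    have := congrFun hc i
    simp only [Pi.mul_apply, Pi.single_eq_same, Pi.one_apply] at this
    rw [mul_comm] at this
    exact hsu i (IsUnit.of_mul_eq_one _ this)
  -- if the i-th projection of L is nonzero, then S i ≤ L
  have hSle : ∀ (L : Ideal (∀ i, R i)) (i : Fin m),
      L.map (Pi.evalRingHom R i) ≠ ⊥ → S i ≤ L := by
    intro L i hL
    have hsi : s i ∈ L.map (Pi.evalRingHom R i) := hsmem i _ hL
    obtain ⟨y, hyL, hyi⟩ := Ideal.mem_map_iff_of_surjective _ (eval_surj i) |>.mp hsi
    have hyi' : y i = s i := hyi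
    have := single_mem_of_mem hyL i
    rw [hyi'] at this
    exact (Ideal.span_singleton_le_iff_mem _).mpr this
  -- if the i-th projection of L is zero, then S i ⊓ L = ⊥
  have hSinf : ∀ (L : Ideal (∀ i, R i)) (i : Fin m),
      L.map (Pi.evalRingHom R i) = ⊥ → S i ⊓ L = ⊥ := by
    intro L i hL
    rw [eq_bot_iff]
    rintro x ⟨hxS, hxL⟩
    obtain ⟨c, hc⟩ := Ideal.mem_span_singleton'.mp hxS
    have hx : x = 0 := by
      funext j
      by_cases h : j = i
      · subst h; exact apply_eq_zero_of_map_eq_bot hL hxL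
      · have := congrFun hc j
        rw [Pi.mul_apply, Pi.single_eq_of_ne h, mul_zero] at this
        exact this.symm
    simp [hx]
  have adj_iff : ∀ A B : NontrivialIdeal (∀ i, R i),
      G.Adj A B ↔ A ≠ B ∧ A.1 ⊓ B.1 ≠ ⊥ := fun _ _ => Iff.rfl
  -- diameter at most two
  have diam : ∀ A B : NontrivialIdeal (∀ i, R i), A ≠ B → G.edist A B ≤ 2 := by
    intro A B hAB
    by_cases hinf : A.1 ⊓ B.1 = ⊥
    · -- find a common neighbour
      obtain ⟨x, hxA, hx0⟩ := Submodule.ne_bot_iff _ |>.mp A.2.1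
      obtain ⟨p, hp⟩ := Function.ne_iff.mp hx0
      have hAp : A.1.map (Pi.evalRingHom R p) ≠ ⊥ := map_eval_ne_bot_of_apply_ne_zero hxA hp
      obtain ⟨y, hyB, hy0⟩ := Submodule.ne_bot_iff _ |>.mp B.2.1
      obtain ⟨q, hq⟩ := Function.ne_iff.mp hy0
      have hBq : B.1.map (Pi.evalRingHom R q) ≠ ⊥ := map_eval_ne_bot_of_apply_ne_zero hyB hq
      have hpq : p ≠ q := by
        intro h
        subst h
        have h1 : Pi.single p (s p) ∈ A.1 ⊓ B.1 :=
          ⟨hSle A.1 p hAp (Ideal.mem_span_singleton_self _),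
           hSle B.1 p hBq (Ideal.mem_span_singleton_self _)⟩
        rw [hinf] at h1
        exact hsingle0 p (by simpa using h1)
      have hKbot : S p ⊔ S q ≠ ⊥ := by
        intro h
        exact hSbot p (le_bot_iff.mp (h ▸ le_sup_left))
      have hKtop : S p ⊔ S q ≠ ⊤ := by
        intro h
        have h1 : (1 : ∀ i, R i) ∈ S p ⊔ S q := h ▸ Submodule.mem_top
        obtain ⟨x, hx, y, hy, hxy⟩ := Submodule.mem_sup.mp h1
        obtain ⟨c, hc⟩ := Ideal.mem_span_singleton'.mp hx
        obtain ⟨d, hd⟩ := Ideal.mem_span_singleton'.mp hy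
        have := congrFun hxy p
        rw [← hc, ← hd] at this
        simp only [Pi.add_apply, Pi.mul_apply, Pi.single_eq_same, Pi.one_apply] at this
        rw [Pi.single_eq_of_ne hpq, mul_zero, add_zero, mul_comm] at this
        exact hsu p (IsUnit.of_mul_eq_one _ this)
      set K : NontrivialIdeal (∀ i, R i) := ⟨S p ⊔ S q, hKbot, hKtop⟩ with hK
      have hSpK : S p ≤ K.1 := le_sup_left
      have hSqK : S q ≤ K.1 := le_sup_right
      have hKA : K.1 ⊓ A.1 ≠ ⊥ := by
        intro h
        exact hSbot p (le_bot_iff.mp (h ▸ le_inf hSpK (hSle A.1 p hAp)))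
      have hKB : K.1 ⊓ B.1 ≠ ⊥ := by
        intro h
        exact hSbot q (le_bot_iff.mp (h ▸ le_inf hSqK (hSle B.1 q hBq)))
      have hAK : G.Adj A K := by
        rw [adj_iff]
        refine ⟨?_, ?_⟩
        · intro h
          apply hKB
          rw [← h, hinf]
        · rw [inf_comm]; exact hKA
      have hKB' : G.Adj K B := by
        rw [adj_iff]
        refine ⟨?_, ?_⟩
        · intro h
          apply hKA
          rw [h, inf_comm, hinf]
        · exact hKB
      calc G.edist A B ≤ G.edist A K + G.edist K B := SimpleGraph.edist_triangle
        _ = 1 + 1 := by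
            rw [SimpleGraph.edist_eq_one_iff_adj.mpr hAK, SimpleGraph.edist_eq_one_iff_adj.mpr hKB']
        _ = 2 := one_add_one_eq_two
    · have : G.Adj A B := (adj_iff A B).mpr ⟨hAB, hinf⟩
      rw [SimpleGraph.edist_eq_one_iff_adj.mpr this]
      exact one_le_two
  have hIJne : I ≠ J := by
    obtain ⟨i, hi⟩ := hzp
    intro h
    rw [h] at hi
    exact hi Iff.rfl
  constructor
  · intro hmmd
    by_contra hne
    have hadj : G.Adj I J := (adj_iff I J).mpr ⟨hIJne, hne⟩
    have hd1 : G.edist I J = 1 := SimpleGraph.edist_eq_one_iff_adj.mpr hadj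
    obtain ⟨i, hi⟩ := hzp
    -- the candidate far vertex
    set W : NontrivialIdeal (∀ i, R i) := ⟨S i, hSbot i, hStop i⟩ with hW
    by_cases hI : I.1.map (Pi.evalRingHom R i) = ⊥
    · have hJ : J.1.map (Pi.evalRingHom R i) ≠ ⊥ := by tauto
      have hWI : W.1 ⊓ I.1 = ⊥ := hSinf I.1 i hI
      have hJW : G.Adj J W := by
        rw [adj_iff]
        refine ⟨?_, ?_⟩
        · intro h
          apply hne
          rw [← h] at hWI
          rw [inf_comm]
          exact hWI
        · intro h
          apply hSbot i
          exact le_bot_iff.mp (h ▸ le_inf (hSle J.1 i hJ) le_rfl)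
      have hle := hmmd.2.2 W hJW
      rw [hd1] at hle
      have hIW : I ≠ W := by
        intro h
        apply I.2.1
        rw [h] at hWI ⊢
        rw [inf_idem] at hWI
        exact hWI
      have h1le : (1 : ℕ∞) ≤ G.edist I W :=
        Order.one_le_iff_pos.mpr (SimpleGraph.edist_pos_of_ne hIW)
      have : G.Adj I W := SimpleGraph.edist_eq_one_iff_adj.mp (le_antisymm hle h1le)
      exact ((adj_iff I W).mp this).2 (by rw [inf_comm]; exact hWI)
    · have hJ : J.1.map (Pi.evalRingHom R i) = ⊥ := by tauto
      have hWJ : W.1 ⊓ J.1 = ⊥ := hSinf J.1 i hJ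
      have hIW : G.Adj I W := by
        rw [adj_iff]
        refine ⟨?_, ?_⟩
        · intro h
          apply hne
          rw [← h] at hWJ
          exact hWJ
        · intro h
          apply hSbot i
          exact le_bot_iff.mp (h ▸ le_inf (hSle I.1 i hI) le_rfl)
      have hle := hmmd.2.1 W hIW
      rw [hd1] at hle
      have hJW : J ≠ W := by
        intro h
        apply J.2.1
        rw [h] at hWJ ⊢
        rw [inf_idem] at hWJ
        exact hWJ
      have h1le : (1 : ℕ∞) ≤ G.edist J W :=
        Order.one_le_iff_pos.mpr (SimpleGraph.edist_pos_of_ne hJW)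
      have : G.Adj J W := SimpleGraph.edist_eq_one_iff_adj.mp (le_antisymm hle h1le)
      exact ((adj_iff J W).mp this).2 (by rw [inf_comm]; exact hWJ)
  · intro hbot
    have h2le : (2 : ℕ∞) ≤ G.edist I J := by
      have hne1 : G.edist I J ≠ 1 := by
        intro h
        exact ((adj_iff I J).mp (SimpleGraph.edist_eq_one_iff_adj.mp h)).2 hbot
      have h1lt : (1 : ℕ∞) < G.edist I J :=
        lt_of_le_of_ne (Order.one_le_iff_pos.mpr (SimpleGraph.edist_pos_of_ne hIJne))
          (Ne.symm hne1)
      have := Order.add_one_le_of_lt h1lt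
      rwa [one_add_one_eq_two] at this
    refine ⟨hIJne, ?_, ?_⟩
    · intro w hw
      have hwJ : J ≠ w := by
        intro h
        subst h
        exact ((adj_iff I J).mp hw).2 hbot
      exact le_trans (diam J w hwJ) h2le
    · intro w hw
      have hwI : I ≠ w := by
        intro h
        subst h
        exact ((adj_iff I J).mp (hw.symm)).2 hbot
      exact le_trans (diam I w hwI) h2le
end
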